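/- The standard Gaussian cumulative distribution function Φ(d) = (1/√(2π)) ∫_{-∞}^d e^{-u²/2} du is log-concave on ℝ. -/

import Mathlib

open Real MeasureTheory Set Filter Topology

noncomputable def gaussG : ℝ → ℝ := fun u => Real.exp (-u ^ 2 / 2)

lemma gaussG_pos (u : ℝ) : 0 < gaussG u := Real.exp_pos _

lemma gaussG_eq : gaussG = fun u : ℝ => Real.exp (-(1/2 : ℝ) * u ^ 2) := by
  funext u; simp only [gaussG]; ring_nf

lemma gaussG_integrable : Integrable gaussG := by
  rw [gaussG_eq]
  exact integrable_exp_neg_mul_sq (by norm_num)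

lemma gaussG_continuous : Continuous gaussG := by
  rw [gaussG_eq]; continuity

lemma mul_gaussG_integrable : Integrable (fun u : ℝ => u * gaussG u) := by
  have h := integrable_rpow_mul_exp_neg_mul_sq (b := 1/2) (by norm_num)
    (s := 1) (by norm_num)
  rw [gaussG_eq]
  simpa [Real.rpow_one] using h

lemma gaussG_hasDerivAt (x : ℝ) : HasDerivAt gaussG (-x * gaussG x) x := by
  have h1 : HasDerivAt (fun u : ℝ => -u ^ 2 / 2) (-x) x := by
    have := ((hasDerivAt_pow 2 x).neg.div_const 2)
    refine this.congr_deriv ?_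
    simp; ring
  have h2 := (Real.hasDerivAt_exp (-x ^ 2 / 2)).comp x h1
  refine h2.congr_deriv ?_
  simp only [gaussG]; ring

noncomputable def gaussF : ℝ → ℝ := fun x => ∫ u in Set.Iic x, gaussG u

lemma gaussF_pos (x : ℝ) : 0 < gaussF x := by
  refine (setIntegral_pos_iff_support_of_nonneg_ae ?_ ?_).2 ?_
  · filter_upwards with u using (gaussG_pos u).le
  · exact gaussG_integrable.integrableOn
  · have hs : Function.support gaussG = univ := by
      ext u; simp [Function.support, (gaussG_pos u).ne']
    rw [hs, univ_inter, Real.volume_Iic]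
    simp

lemma gaussF_hasDerivAt (x : ℝ) : HasDerivAt gaussF (gaussG x) x := by
  have heq : gaussF = fun y => gaussF 0 + ∫ t in (0:ℝ)..y, gaussG t := by
    funext y
    have h := intervalIntegral.integral_Iic_sub_Iic (gaussG_integrable.integrableOn (s := Iic 0))
      (gaussG_integrable.integrableOn (s := Iic y))
    simp only [gaussF]
    linarith [h]
  rw [heq]
  refine HasDerivAt.const_add _ ?_
  exact intervalIntegral.integral_hasDerivAt_right
    gaussG_integrable.intervalIntegrable
    gaussG_continuous.stronglyMeasurable.stronglyMeasurableAtFilter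
    gaussG_continuous.continuousAt

lemma gaussF_key (x : ℝ) : -x * gaussF x ≤ gaussG x := by
  rcases le_or_gt 0 x with hx | hx
  · have h1 : -x * gaussF x ≤ 0 :=
      mul_nonpos_of_nonpos_of_nonneg (by linarith) (gaussF_pos x).le
    exact h1.trans (gaussG_pos x).le
  · -- x < 0
    have hint : ∫ u in Iic x, u * gaussG u = -gaussG x := by
      have h := integral_Iic_of_hasDerivAt_of_tendsto
        (f := fun u => -gaussG u) (f' := fun u => u * gaussG u) (a := x) (m := 0)
        ?_ ?_ ?_ ?_
      · rw [h]; ring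
      · exact (gaussG_continuous.neg.continuousAt).continuousWithinAt
      · intro u _
        have := (gaussG_hasDerivAt u).neg
        refine this.congr_deriv ?_; ring
      · exact mul_gaussG_integrable.integrableOn
      · have h2 : Tendsto (fun u : ℝ => -u ^ 2 / 2) atBot atBot := by
          apply Tendsto.atBot_div_const (by norm_num : (0:ℝ) < 2)
          apply tendsto_neg_atTop_atBot.comp
          have habs : Tendsto (fun u : ℝ => |u| ^ 2) atBot atTop :=
            (tendsto_pow_atTop (two_ne_zero)).comp tendsto_abs_atBot_atTop
          simpa [sq_abs] using habs
        have h3 : Tendsto gaussG atBot (𝓝 0) := by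
          exact Real.tendsto_exp_atBot.comp h2
        simpa using h3.neg
    have hmono : gaussF x ≤ ∫ u in Iic x, (u / x) * gaussG u := by
      refine setIntegral_mono_on gaussG_integrable.integrableOn ?_ measurableSet_Iic ?_
      · have : (fun u : ℝ => (u / x) * gaussG u) = fun u => x⁻¹ * (u * gaussG u) := by
          funext u; ring
        rw [this]
        exact (mul_gaussG_integrable.const_mul _).integrableOn
      · intro u hu
        have h1 : 1 ≤ u / x := (one_le_div_of_neg hx).2 hu
        calc gaussG u = 1 * gaussG u := (one_mul _).symm
          _ ≤ (u / x) * gaussG u :=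
            mul_le_mul_of_nonneg_right h1 (gaussG_pos u).le
    have hval : ∫ u in Iic x, (u / x) * gaussG u = gaussG x / (-x) := by
      have : (fun u : ℝ => (u / x) * gaussG u) = fun u => x⁻¹ * (u * gaussG u) := by
        funext u; ring
      rw [this, integral_const_mul, hint]
      rw [div_neg]; ring
    rw [hval] at hmono
    have hx' : (0:ℝ) < -x := by linarith
    calc -x * gaussF x ≤ -x * (gaussG x / (-x)) :=
          mul_le_mul_of_nonneg_left hmono hx'.le
      _ = gaussG x := by field_simp [hx.ne]

/-- The standard Gaussian CDF is log-concave: it is everywhere positive and its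
logarithm is concave on ℝ. -/
theorem gaussian_cdf_log_concave
    (Φ : ℝ → ℝ)
    (hΦ : ∀ d, Φ d = (Real.sqrt (2 * Real.pi))⁻¹ * ∫ u in Set.Iic d, Real.exp (-u ^ 2 / 2)) :
    (∀ d, 0 < Φ d) ∧ ConcaveOn ℝ Set.univ (fun d => Real.log (Φ d)) := by
  have hc : 0 < (Real.sqrt (2 * Real.pi))⁻¹ := by
    have : 0 < Real.sqrt (2 * Real.pi) :=
      Real.sqrt_pos.2 (by positivity)
    positivity
  have hΦF : ∀ d, Φ d = (Real.sqrt (2 * Real.pi))⁻¹ * gaussF d := fun d => hΦ d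
  have hpos : ∀ d, 0 < Φ d := by
    intro d; rw [hΦF d]; exact mul_pos hc (gaussF_pos d)
  refine ⟨hpos, ?_⟩
  have hconc : ConcaveOn ℝ univ (fun d => Real.log (gaussF d)) := by
    refine concaveOn_of_hasDerivWithinAt2_nonpos convex_univ
      (f' := fun x => gaussG x / gaussF x)
      (f'' := fun x => (-x * gaussG x * gaussF x - gaussG x * gaussG x) / gaussF x ^ 2)
      ?_ ?_ ?_ ?_
    · intro x _
      exact (((gaussF_hasDerivAt x).log (gaussF_pos x).ne').continuousAt).continuousWithinAt
    · intro x _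
      exact ((gaussF_hasDerivAt x).log (gaussF_pos x).ne').hasDerivWithinAt
    · intro x _
      exact ((gaussG_hasDerivAt x).div (gaussF_hasDerivAt x) (gaussF_pos x).ne').hasDerivWithinAt
    · intro x _
      apply div_nonpos_of_nonpos_of_nonneg
      · nlinarith [gaussF_key x, gaussG_pos x, gaussF_pos x]
      · positivity
  have heq : (fun d => Real.log (Φ d))
      = fun d => Real.log (gaussF d) + Real.log (Real.sqrt (2 * Real.pi))⁻¹ := by
    funext d
    rw [hΦF d, Real.log_mul hc.ne' (gaussF_pos d).ne', add_comm]
  rw [heq]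
  exact hconc.add_const _
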